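/- For j = 1,2, suppose there exists a (c_j, t) LP-packing {P_{j,0},…,P_{j,t-1}} in an abelian group G_j of order t²c_j² relative to a subgroup U_j of order t·c_j. Define, for ℓ = 0,…,t-1, K_ℓ = P_{1,ℓ}·U₂ ∪ U₁·P_{2,ℓ} ∪ ⋃_{i=0}^{t-1} P_{1,i}·P_{2,i+ℓ} (indices mod t), where A·B denotes {(a,b) : a∈A, b∈B} ⊆ G₁×G₂. Then {K₀,…,K_{t-1}} is a (t·c₁c₂, t) LP-packing in G₁×G₂ relative to U₁×U₂. -/

import Mathlib

open Finset BigOperators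

variable {G : Type*}

/-- Number of ordered pairs `(x,y)` with `x,y ∈ D`, `x ≠ y`, `x * y⁻¹ = g`. -/
noncomputable def diffCount [Group G] (D : Set G) (g : G) : ℕ :=
  Nat.card {p : G × G // p.1 ∈ D ∧ p.2 ∈ D ∧ p.1 ≠ p.2 ∧ p.1 * p.2⁻¹ = g}

/-- `D` is a `(v,k,λ,μ)` partial difference set in `G`. -/
def IsPDS [Group G] (D : Set G) (v k : ℕ) (l m : ℤ) : Prop :=
  Nat.card G = v ∧ Nat.card D = k ∧
    ∀ g : G, g ≠ 1 →
      (g ∈ D → (diffCount D g : ℤ) = l) ∧ (g ∉ D → (diffCount D g : ℤ) = m)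

/-- A regular PDS: a PDS avoiding the identity and closed under inversion. -/
def IsRegularPDS [Group G] (D : Set G) (v k : ℕ) (l m : ℤ) : Prop :=
  IsPDS D v k l m ∧ (1 : G) ∉ D ∧ D⁻¹ = D

/-- A regular `(n,r)` Latin square type PDS. -/
def IsLatinPDS [Group G] (D : Set G) (n r : ℕ) : Prop :=
  IsRegularPDS D (n ^ 2) (r * (n - 1)) ((n : ℤ) + (r : ℤ) ^ 2 - 3 * r) ((r : ℤ) ^ 2 - r)

/-- A regular `(n,r)` negative Latin square type PDS. -/
def IsNegLatinPDS [Group G] (D : Set G) (n r : ℕ) : Prop :=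
  IsRegularPDS D (n ^ 2) (r * (n + 1)) (-(n : ℤ) + (r : ℤ) ^ 2 + 3 * r) ((r : ℤ) ^ 2 + r)

/-- Character sum `χ(D) = ∑_{d ∈ D} χ(d)`. -/
noncomputable def charSum [Group G] (χ : G →* ℂˣ) (D : Set G) : ℂ :=
  ∑ᶠ d ∈ D, (χ d : ℂ)

/-- The multiset of character sums `{χ(P 0), …, χ(P (t-1))}`. -/
noncomputable def charMultiset [Group G] {t : ℕ} (χ : G →* ℂˣ) (P : Fin t → Set G) :
    Multiset ℂ :=
  (Finset.univ.val : Multiset (Fin t)).map fun i => charSum χ (P i)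

/-- `χ` is principal on the subgroup `U`. -/
def IsPrincipalOn [Group G] (χ : G →* ℂˣ) (U : Subgroup G) : Prop :=
  ∀ u ∈ U, χ u = 1

/-- A `(c,t)` LP-packing in `G` relative to `U`. -/
def IsLPPacking [CommGroup G] (c t : ℕ) (P : Fin t → Set G) (U : Subgroup G) : Prop :=
  Nat.card G = t ^ 2 * c ^ 2 ∧ Nat.card U = t * c ∧
    (∀ i, IsLatinPDS (P i) (t * c) c) ∧
    (∀ i j, i ≠ j → Disjoint (P i) (P j)) ∧
    (⋃ i, P i) = Set.univ \ (U : Set G)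

/-- A `(c,t-1)` NLP-packing in `G`. -/
def IsNLPPacking [CommGroup G] (c t : ℕ) (P : Fin (t - 1) → Set G) : Prop :=
  Nat.card G = t ^ 2 * c ^ 2 ∧
    (∀ i, IsNegLatinPDS (P i) (t * c) c) ∧
    IsNegLatinPDS (Set.univ \ ({1} ∪ ⋃ i, P i)) (t * c) (c - 1)

/-- A `(c,t)` LP-partition in `G − V` relative to `H`. -/
def IsLPPartition [CommGroup G] (c t : ℕ) (R : Fin t → Set G) (V H : Subgroup G) : Prop :=
  Nat.card G = t ^ 2 * c ^ 2 ∧ Nat.card V = t * c ^ 2 ∧ H ≤ V ∧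
    (∀ i, Nat.card (R i) = (t - 1) * c ^ 2) ∧
    (∀ i j, i ≠ j → Disjoint (R i) (R j)) ∧
    (⋃ i, R i) = Set.univ \ (V : Set G) ∧
    ∀ χ : G →* ℂˣ, χ ≠ 1 →
      (IsPrincipalOn χ V → charMultiset χ R = Multiset.replicate t (-(c : ℂ) ^ 2)) ∧
      (¬ IsPrincipalOn χ V → IsPrincipalOn χ H →
        charMultiset χ R = Multiset.replicate t 0) ∧
      (¬ IsPrincipalOn χ H →
        charMultiset χ R = ((t : ℂ) - 1) * (c : ℂ) ::ₘ Multiset.replicate (t - 1) (-(c : ℂ)))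

set_option linter.unusedSectionVars false
set_option linter.unusedTactic false
set_option linter.unusedVariables false
set_option maxHeartbeats 1000000

open Classical in
/-- indicator -/
noncomputable def indC (D : Set G) (g : G) : ℂ := if g ∈ D then 1 else 0

lemma indC_of_mem {D : Set G} {g : G} (h : g ∈ D) : indC D g = 1 := by simp [indC, h]
lemma indC_of_not_mem {D : Set G} {g : G} (h : g ∉ D) : indC D g = 0 := by simp [indC, h]

lemma indC_union {A B : Set G} (h : Disjoint A B) (g : G) :
    indC (A ∪ B) g = indC A g + indC B g := by
  unfold indC
  by_cases hA : g ∈ A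
  · have := Set.disjoint_left.mp h hA
    simp_all
  · by_cases hB : g ∈ B <;> simp_all

lemma indC_iUnion {t : ℕ} {P : Fin t → Set G} (h : ∀ i j, i ≠ j → Disjoint (P i) (P j))
    (g : G) : indC (⋃ i, P i) g = ∑ i, indC (P i) g := by
  classical
  by_cases hg : g ∈ ⋃ i, P i
  · obtain ⟨i, hi⟩ := Set.mem_iUnion.mp hg
    rw [indC_of_mem hg, Finset.sum_eq_single i]
    · exact (indC_of_mem hi).symm
    · intro j _ hj
      exact indC_of_not_mem fun hgj => Set.disjoint_left.mp (h j i hj) hgj hi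
    · simp
  · rw [indC_of_not_mem hg, eq_comm]
    refine Finset.sum_eq_zero fun i _ => indC_of_not_mem fun hgi => hg ?_
    exact Set.mem_iUnion.mpr ⟨i, hgi⟩

lemma indC_prod {α β : Type*} (A : Set α) (B : Set β) (p : α × β) :
    indC (A ×ˢ B) p = indC A p.1 * indC B p.2 := by
  unfold indC
  by_cases h1 : p.1 ∈ A <;> by_cases h2 : p.2 ∈ B <;> simp_all

section basic
variable [CommGroup G] [Fintype G]

lemma charSum_eq_sum (χ : G →* ℂˣ) (D : Set G) :
    charSum χ D = ∑ g : G, indC D g * (χ g : ℂ) := by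
  classical
  unfold charSum indC
  rw [show D = ↑(Finset.univ.filter (· ∈ D)) by simp, finsum_mem_coe_finset,
    Finset.sum_filter]
  congr 1; ext g
  split_ifs <;> simp_all

lemma indC_sum_card (D : Set G) : ∑ g : G, indC D g = (Nat.card D : ℂ) := by
  classical
  unfold indC
  rw [Finset.sum_boole]
  simp [Nat.card_eq_fintype_card, Fintype.card_subtype]

end basic

section grp
variable [CommGroup G] [Fintype G]

lemma unit_coe_ne_one {u : ℂˣ} (h : u ≠ 1) : (u : ℂ) ≠ 1 := by
  intro h'; exact h (Units.ext (by simpa using h'))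

lemma sum_indC_subgroup_eq_zero {χ : G →* ℂˣ} {U : Subgroup G} {u0 : G}
    (hu0 : u0 ∈ U) (hne : χ u0 ≠ 1) :
    ∑ g : G, indC (U : Set G) g * (χ g : ℂ) = 0 := by
  have key : ∑ g : G, indC (U : Set G) g * (χ g : ℂ)
      = (χ u0 : ℂ) * ∑ g : G, indC (U : Set G) g * (χ g : ℂ) := by
    rw [Finset.mul_sum, eq_comm]
    refine Fintype.sum_equiv (Equiv.mulLeft u0) _ _ fun g => ?_
    have h' : indC (U : Set G) (u0 * g) = indC (U : Set G) g := by
      by_cases hg : g ∈ U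
      · rw [indC_of_mem (by simpa using mul_mem hu0 hg),
          indC_of_mem (by simpa using hg)]
      · rw [indC_of_not_mem (by
          simp only [SetLike.mem_coe]
          exact fun hm => hg ((mul_mem_cancel_left hu0).mp hm)),
          indC_of_not_mem (by simpa using hg)]
    simp only [Equiv.coe_mulLeft, h', map_mul, Units.val_mul]
    ring
  have h2 : ((χ u0 : ℂ) - 1) * ∑ g : G, indC (U : Set G) g * (χ g : ℂ) = 0 := by
    rw [sub_mul, one_mul, ← key, sub_self]
  rcases mul_eq_zero.mp h2 with h | h
  · exact absurd (by linear_combination h) (unit_coe_ne_one hne)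
  · exact h

lemma sum_indC_subgroup_principal {χ : G →* ℂˣ} {U : Subgroup G}
    (h : ∀ u ∈ U, χ u = 1) :
    ∑ g : G, indC (U : Set G) g * (χ g : ℂ) = (Nat.card U : ℂ) := by
  classical
  have : ∀ g : G, indC (U : Set G) g * (χ g : ℂ) = indC (U : Set G) g := by
    intro g
    by_cases hg : g ∈ U
    · rw [h g hg]; simp
    · simp [indC, hg]
  rw [Finset.sum_congr rfl fun g _ => this g]
  unfold indC
  rw [Finset.sum_boole]
  simp [Nat.card_eq_fintype_card, Fintype.card_subtype, SetLike.mem_coe]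

lemma sum_char_ne_one {χ : G →* ℂˣ} (h : χ ≠ 1) :
    ∑ g : G, (χ g : ℂ) = 0 := by
  obtain ⟨g0, hg0⟩ : ∃ g0, χ g0 ≠ 1 := by
    by_contra hc
    push_neg at hc
    exact h (MonoidHom.ext fun g => hc g)
  have := sum_indC_subgroup_eq_zero (U := ⊤) (Subgroup.mem_top g0) hg0
  simpa [indC] using this

end grp

section dual
variable [CommGroup G] [Finite G]

lemma dual_mulEquiv : Nonempty ((G →* ℂˣ) ≃* G) := by
  haveI : NeZero ((Monoid.exponent G : ℂ)) :=
    ⟨Nat.cast_ne_zero.mpr Monoid.exponent_ne_zero_of_finite⟩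
  exact CommGroup.monoidHom_mulEquiv_of_hasEnoughRootsOfUnity G ℂ

lemma exists_char_ne_one {a : G} (ha : a ≠ 1) : ∃ χ : G →* ℂˣ, χ a ≠ 1 := by
  haveI : NeZero ((Monoid.exponent G : ℂ)) :=
    ⟨Nat.cast_ne_zero.mpr Monoid.exponent_ne_zero_of_finite⟩
  exact CommGroup.exists_apply_ne_one_of_hasEnoughRootsOfUnity G ℂ ha

noncomputable instance instFintypeDual : Fintype (G →* ℂˣ) := by
  have e := (dual_mulEquiv (G := G)).some
  haveI : Finite (G →* ℂˣ) := Finite.of_equiv G e.symm.toEquiv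
  exact Fintype.ofFinite _

lemma card_dual : Nat.card (G →* ℂˣ) = Nat.card G := by
  obtain ⟨e⟩ := dual_mulEquiv (G := G)
  exact Nat.card_congr e.toEquiv

open Classical in
lemma sum_dual_char (g : G) :
    ∑ χ : G →* ℂˣ, (χ g : ℂ) = if g = 1 then (Nat.card G : ℂ) else 0 := by
  rcases eq_or_ne g 1 with rfl | hg
  · simp only [map_one, Units.val_one, if_pos]
    rw [Finset.sum_const, Finset.card_univ, nsmul_eq_mul, mul_one,
      ← Nat.card_eq_fintype_card, card_dual]
  · rw [if_neg hg]
    obtain ⟨ψ, hψ⟩ := exists_char_ne_one hg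
    have key : ∑ χ : G →* ℂˣ, (ψ g : ℂ) * (χ g : ℂ) = ∑ χ : G →* ℂˣ, (χ g : ℂ) := by
      refine Fintype.sum_equiv (Equiv.mulLeft ψ) _ _ fun χ => ?_
      simp [MonoidHom.mul_apply]
    rw [← Finset.mul_sum] at key
    have h2 : ((ψ g : ℂ) - 1) * ∑ χ : G →* ℂˣ, (χ g : ℂ) = 0 := by
      rw [sub_mul, one_mul, key, sub_self]
    rcases mul_eq_zero.mp h2 with h | h
    · exact absurd (show (ψ g : ℂ) = 1 by linear_combination h)
        (fun h' => hψ (Units.ext (by simpa using h')))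
    · exact h

lemma char_inversion [Fintype G] (f : G → ℂ)
    (h : ∀ χ : G →* ℂˣ, ∑ g : G, f g * (χ g : ℂ) = 0) (y : G) : f y = 0 := by
  classical
  have h0 : ∑ χ : G →* ℂˣ, (χ y⁻¹ : ℂ) * ∑ g : G, f g * (χ g : ℂ) = 0 := by
    simp [h]
  have h1 : ∑ χ : G →* ℂˣ, (χ y⁻¹ : ℂ) * ∑ g : G, f g * (χ g : ℂ)
      = ∑ g : G, f g * ∑ χ : G →* ℂˣ, (χ (g * y⁻¹) : ℂ) := by
    calc ∑ χ : G →* ℂˣ, (χ y⁻¹ : ℂ) * ∑ g : G, f g * (χ g : ℂ)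
        = ∑ χ : G →* ℂˣ, ∑ g : G, f g * (χ (g * y⁻¹) : ℂ) := by
          refine Finset.sum_congr rfl fun χ _ => ?_
          rw [Finset.mul_sum]
          refine Finset.sum_congr rfl fun g _ => ?_
          simp only [map_mul, Units.val_mul]
          ring
      _ = ∑ g : G, ∑ χ : G →* ℂˣ, f g * (χ (g * y⁻¹) : ℂ) := Finset.sum_comm
      _ = ∑ g : G, f g * ∑ χ : G →* ℂˣ, (χ (g * y⁻¹) : ℂ) := by
          refine Finset.sum_congr rfl fun g _ => ?_
          rw [Finset.mul_sum]
  rw [h1] at h0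
  have h2 : ∀ g : G, f g * ∑ χ : G →* ℂˣ, (χ (g * y⁻¹) : ℂ)
      = if g = y then f y * (Nat.card G : ℂ) else 0 := by
    intro g
    rw [sum_dual_char]
    rcases eq_or_ne g y with rfl | hgy
    · simp
    · rw [if_neg (by simpa [mul_inv_eq_one] using hgy), if_neg hgy, mul_zero]
  rw [Finset.sum_congr rfl fun g _ => h2 g, Finset.sum_ite_eq' Finset.univ y
    (fun _ => f y * (Nat.card G : ℂ))] at h0
  simp only [Finset.mem_univ, if_pos] at h0
  rcases mul_eq_zero.mp h0 with h | h
  · exact h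
  · exact absurd h (Nat.cast_ne_zero.mpr Nat.card_pos.ne')

section ndcsec
variable [CommGroup G] [Fintype G]

noncomputable def ndc (D : Set G) (g : G) : ℕ :=
  Nat.card {p : G × G // p.1 ∈ D ∧ p.2 ∈ D ∧ p.1 * p.2⁻¹ = g}

lemma diffCount_eq_ndc {D : Set G} {g : G} (hg : g ≠ 1) : diffCount D g = ndc D g := by
  apply Nat.card_congr
  apply Equiv.subtypeEquivRight
  intro p
  constructor
  · rintro ⟨h1, h2, _, h4⟩; exact ⟨h1, h2, h4⟩
  · rintro ⟨h1, h2, h4⟩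
    refine ⟨h1, h2, fun he => hg ?_, h4⟩
    rw [← h4, he, mul_inv_cancel]

lemma ndc_one (D : Set G) : ndc D 1 = Nat.card D := by
  apply Nat.card_congr
  refine ⟨fun p => ⟨p.1.1, p.2.1⟩, fun d => ⟨(d.1, d.1), d.2, d.2, by simp⟩, ?_, ?_⟩
  · rintro ⟨⟨x, y⟩, h1, h2, h3⟩
    have : x = y := by
      have := h3
      rwa [mul_inv_eq_one] at this
    subst this
    rfl
  · rintro ⟨d, hd⟩; rfl

open Classical in
lemma ndc_cast (D : Set G) (g : G) :
    (ndc D g : ℂ) = ∑ x : G, ∑ y : G, indC D x * indC D y *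
      (if x * y⁻¹ = g then 1 else 0) := by
  classical
  have h1 : ndc D g = (Finset.univ.filter
      (fun p : G × G => p.1 ∈ D ∧ p.2 ∈ D ∧ p.1 * p.2⁻¹ = g)).card := by
    rw [ndc, Nat.card_eq_fintype_card, Fintype.card_subtype]
  rw [h1, Finset.card_filter]
  rw [← Finset.sum_product']
  push_cast
  refine Finset.sum_congr rfl fun p _ => ?_
  by_cases hx : p.1 ∈ D <;> by_cases hy : p.2 ∈ D <;> by_cases hxy : p.1 * p.2⁻¹ = g <;>
    simp_all [indC]

lemma mem_inv_iff_of_inv_eq {D : Set G} (hinv : D⁻¹ = D) (z : G) : z⁻¹ ∈ D ↔ z ∈ D := by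
  constructor
  · intro h
    rw [← hinv]
    simpa using h
  · intro h
    rw [← hinv] at h
    simpa using h

lemma charSum_inv_eq {D : Set G} (hinv : D⁻¹ = D) (χ : G →* ℂˣ) :
    charSum χ D = ∑ y : G, indC D y * (χ y⁻¹ : ℂ) := by
  rw [charSum_eq_sum, eq_comm]
  refine Fintype.sum_equiv (Equiv.inv G) _ _ fun y => ?_
  simp only [Equiv.inv_apply]
  congr 1
  by_cases hy : y ∈ D
  · rw [indC_of_mem hy, indC_of_mem ((mem_inv_iff_of_inv_eq hinv y).mpr hy)]
  · rw [indC_of_not_mem hy,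
      indC_of_not_mem (fun hc => hy ((mem_inv_iff_of_inv_eq hinv y).mp hc))]

lemma charSum_sq (D : Set G) (hinv : D⁻¹ = D) (χ : G →* ℂˣ) :
    charSum χ D * charSum χ D = ∑ g : G, (ndc D g : ℂ) * (χ g : ℂ) := by
  classical
  rw [eq_comm]
  calc ∑ g : G, (ndc D g : ℂ) * (χ g : ℂ)
      = ∑ g : G, ∑ x : G, ∑ y : G,
          indC D x * indC D y * (if x * y⁻¹ = g then 1 else 0) * (χ g : ℂ) := by
        refine Finset.sum_congr rfl fun g _ => ?_
        rw [ndc_cast, Finset.sum_mul]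
        exact Finset.sum_congr rfl fun x _ => Finset.sum_mul _ _ _
    _ = ∑ x : G, ∑ y : G, ∑ g : G,
          indC D x * indC D y * (if x * y⁻¹ = g then 1 else 0) * (χ g : ℂ) := by
        rw [Finset.sum_comm]
        exact Finset.sum_congr rfl fun x _ => Finset.sum_comm
    _ = ∑ x : G, ∑ y : G, (indC D x * (χ x : ℂ)) * (indC D y * (χ y⁻¹ : ℂ)) := by
        refine Finset.sum_congr rfl fun x _ => Finset.sum_congr rfl fun y _ => ?_
        rw [Finset.sum_eq_single (x * y⁻¹)]
        · rw [if_pos rfl]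
          simp only [map_mul, Units.val_mul, mul_one]
          ring
        · intro g _ hgne
          rw [if_neg (fun hc => hgne hc.symm)]
          ring
        · intro hc; exact absurd (Finset.mem_univ _) hc
    _ = (∑ x : G, indC D x * (χ x : ℂ)) * (∑ y : G, indC D y * (χ y⁻¹ : ℂ)) :=
        (Finset.sum_mul_sum _ _ _ _).symm
    _ = charSum χ D * charSum χ D := by rw [← charSum_eq_sum, ← charSum_inv_eq hinv]
end ndcsec

section pds
variable [CommGroup G] [Fintype G]

lemma sum_indC_one_mul (χ : G →* ℂˣ) :
    ∑ g : G, indC ({1} : Set G) g * (χ g : ℂ) = 1 := by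
  rw [Finset.sum_eq_single 1]
  · rw [indC_of_mem (D := ({1} : Set G)) rfl]; simp
  · intro g _ hg
    rw [indC_of_not_mem (by simpa using hg)]
    ring
  · intro hc; exact absurd (Finset.mem_univ _) hc

/-- linearity decomposition of `∑ g, ndc g * χ g` given the pointwise formula. -/
lemma sum_decomp (D : Set G) (kC lC mC : ℂ)
    (hpt : ∀ g : G, (ndc D g : ℂ)
      = kC * indC ({1} : Set G) g + lC * indC D g
        + mC * (1 - indC ({1} : Set G) g - indC D g))
    (χ : G →* ℂˣ) :
    ∑ g : G, (ndc D g : ℂ) * (χ g : ℂ)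
      = kC + lC * (∑ g : G, indC D g * (χ g : ℂ))
        + mC * ((∑ g : G, (χ g : ℂ)) - 1 - ∑ g : G, indC D g * (χ g : ℂ)) := by
  have : ∑ g : G, (ndc D g : ℂ) * (χ g : ℂ)
      = ∑ g : G, (kC * (indC ({1} : Set G) g * (χ g : ℂ)) + lC * (indC D g * (χ g : ℂ))
          + mC * ((χ g : ℂ) - indC ({1} : Set G) g * (χ g : ℂ) - indC D g * (χ g : ℂ))) := by
    refine Finset.sum_congr rfl fun g _ => ?_
    rw [hpt g]; ring
  rw [this, Finset.sum_add_distrib, Finset.sum_add_distrib, ← Finset.mul_sum, ← Finset.mul_sum,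
    ← Finset.mul_sum, sum_indC_one_mul, Finset.sum_sub_distrib, Finset.sum_sub_distrib,
    sum_indC_one_mul, mul_one]

/-- Forward: a Latin-square-type PDS has character sums `-r` or `n - r`. -/
lemma latin_charSum {D : Set G} {n r : ℕ} (hD : IsLatinPDS D n r) (hn : 1 ≤ n)
    {χ : G →* ℂˣ} (hχ : χ ≠ 1) :
    charSum χ D = -(r : ℂ) ∨ charSum χ D = (n : ℂ) - r := by
  obtain ⟨⟨hv, hk, hpds⟩, h1D, hinv⟩ := hD
  have hpt : ∀ g : G, (ndc D g : ℂ)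
      = ((r : ℂ) * ((n : ℂ) - 1)) * indC ({1} : Set G) g
        + ((n : ℂ) + (r : ℂ) ^ 2 - 3 * r) * indC D g
        + ((r : ℂ) ^ 2 - r) * (1 - indC ({1} : Set G) g - indC D g) := by
    intro g
    rcases eq_or_ne g 1 with rfl | hg
    · rw [ndc_one, hk, indC_of_mem (D := ({1} : Set G)) rfl, indC_of_not_mem h1D]
      push_cast [Nat.cast_sub hn]
      ring
    · rw [indC_of_not_mem (by simpa using hg)]
      by_cases hgD : g ∈ D
      · rw [indC_of_mem hgD, ← diffCount_eq_ndc hg]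
        have := (hpds g hg).1 hgD
        have : (diffCount D g : ℂ) = (n : ℂ) + (r : ℂ) ^ 2 - 3 * r := by
          exact_mod_cast congrArg (Int.cast : ℤ → ℂ) this
        rw [this]; ring
      · rw [indC_of_not_mem hgD, ← diffCount_eq_ndc hg]
        have := (hpds g hg).2 hgD
        have : (diffCount D g : ℂ) = (r : ℂ) ^ 2 - r := by
          exact_mod_cast congrArg (Int.cast : ℤ → ℂ) this
        rw [this]; ring
  have hsq := charSum_sq D hinv χ
  rw [sum_decomp D _ _ _ hpt χ, sum_char_ne_one hχ, ← charSum_eq_sum] at hsq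
  have hfact : (charSum χ D + r) * (charSum χ D - ((n : ℂ) - r)) = 0 := by
    linear_combination hsq
  rcases mul_eq_zero.mp hfact with h | h
  · left; linear_combination h
  · right; linear_combination h

end pds

section pds2
variable [CommGroup G] [Fintype G]

lemma sum_model (D : Set G) (kC lC mC : ℂ) (χ : G →* ℂˣ) :
    ∑ g : G, (kC * indC ({1} : Set G) g + lC * indC D g
        + mC * (1 - indC ({1} : Set G) g - indC D g)) * (χ g : ℂ)
      = kC + lC * charSum χ D
        + mC * ((∑ g : G, (χ g : ℂ)) - 1 - charSum χ D) := by
  have : ∀ g : G, (kC * indC ({1} : Set G) g + lC * indC D g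
        + mC * (1 - indC ({1} : Set G) g - indC D g)) * (χ g : ℂ)
      = kC * (indC ({1} : Set G) g * (χ g : ℂ)) + lC * (indC D g * (χ g : ℂ))
          + mC * ((χ g : ℂ) - indC ({1} : Set G) g * (χ g : ℂ) - indC D g * (χ g : ℂ)) := by
    intro g; ring
  rw [Finset.sum_congr rfl fun g _ => this g, Finset.sum_add_distrib, Finset.sum_add_distrib,
    ← Finset.mul_sum, ← Finset.mul_sum, ← Finset.mul_sum, sum_indC_one_mul,
    Finset.sum_sub_distrib, Finset.sum_sub_distrib, sum_indC_one_mul, mul_one,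
    ← charSum_eq_sum]

lemma charSum_one (D : Set G) : charSum (1 : G →* ℂˣ) D = (Nat.card D : ℂ) := by
  rw [charSum_eq_sum, ← indC_sum_card D]
  refine Finset.sum_congr rfl fun g _ => ?_
  simp

/-- Converse: character sums `-r` or `n-r` imply Latin-square-type PDS. -/
lemma latin_of_charSum [Finite G] {D : Set G} {n r : ℕ}
    (hG : Nat.card G = n ^ 2) (hn : 1 ≤ n) (h1D : (1 : G) ∉ D) (hinv : D⁻¹ = D)
    (hcard : Nat.card D = r * (n - 1))
    (hq : ∀ χ : G →* ℂˣ, χ ≠ 1 → charSum χ D = -(r : ℂ) ∨ charSum χ D = (n : ℂ) - r) :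
    IsLatinPDS D n r := by
  set kC : ℂ := (r : ℂ) * ((n : ℂ) - 1) with hkC
  set lC : ℂ := (n : ℂ) + (r : ℂ) ^ 2 - 3 * r with hlC
  set mC : ℂ := (r : ℂ) ^ 2 - r with hmC
  set f : G → ℂ := fun g => (ndc D g : ℂ) - (kC * indC ({1} : Set G) g + lC * indC D g
      + mC * (1 - indC ({1} : Set G) g - indC D g)) with hf
  have hcardC : (Nat.card D : ℂ) = kC := by
    rw [hcard, hkC]
    push_cast [Nat.cast_sub hn]
    ring
  have h0 : ∀ χ : G →* ℂˣ, ∑ g : G, f g * (χ g : ℂ) = 0 := by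
    intro χ
    have hsplit : ∑ g : G, f g * (χ g : ℂ)
        = charSum χ D * charSum χ D
          - (kC + lC * charSum χ D
            + mC * ((∑ g : G, (χ g : ℂ)) - 1 - charSum χ D)) := by
      have hstep : ∑ g : G, f g * (χ g : ℂ)
          = (∑ g : G, (ndc D g : ℂ) * (χ g : ℂ))
            - ∑ g : G, (kC * indC ({1} : Set G) g + lC * indC D g
                + mC * (1 - indC ({1} : Set G) g - indC D g)) * (χ g : ℂ) := by
        rw [← Finset.sum_sub_distrib]
        exact Finset.sum_congr rfl fun g _ => by rw [hf]; ring
      rw [hstep, ← charSum_sq D hinv χ, sum_model D kC lC mC χ]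
    rw [hsplit]
    by_cases hχ : χ = 1
    · subst hχ
      have hT : ∑ g : G, ((1 : G →* ℂˣ) g : ℂ) = ((n : ℂ)) ^ 2 := by
        have : ∀ g : G, ((1 : G →* ℂˣ) g : ℂ) = 1 := fun g => by simp
        rw [Finset.sum_congr rfl fun g _ => this g, Finset.sum_const, Finset.card_univ,
          nsmul_eq_mul, mul_one, ← Nat.card_eq_fintype_card, hG]
        push_cast; ring
      rw [hT, charSum_one, hcardC, hkC, hlC, hmC]
      ring
    · rw [sum_char_ne_one hχ]
      rcases hq χ hχ with h | h <;> rw [h, hkC, hlC, hmC] <;> push_cast <;> ring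
  have hfz : ∀ g : G, f g = 0 := char_inversion f h0
  refine ⟨⟨hG, hcard, fun g hg => ⟨fun hgD => ?_, fun hgD => ?_⟩⟩, h1D, hinv⟩
  · have := hfz g
    rw [hf] at this
    simp only at this
    rw [indC_of_not_mem (by simpa using hg), indC_of_mem hgD] at this
    have hC : ((diffCount D g : ℤ) : ℂ) = (((n : ℤ) + (r : ℤ) ^ 2 - 3 * (r : ℤ) : ℤ) : ℂ) := by
      push_cast
      rw [diffCount_eq_ndc hg]
      rw [hlC] at this
      linear_combination this
    exact_mod_cast hC
  · have := hfz g
    rw [hf] at this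
    simp only at this
    rw [indC_of_not_mem (by simpa using hg), indC_of_not_mem hgD] at this
    have hC : ((diffCount D g : ℤ) : ℂ) = (((r : ℤ) ^ 2 - (r : ℤ) : ℤ) : ℂ) := by
      push_cast
      rw [diffCount_eq_ndc hg]
      rw [hmC] at this
      linear_combination this
    exact_mod_cast hC

end pds2

section pack
variable [CommGroup G] [Fintype G] {c t : ℕ} {P : Fin t → Set G} {U : Subgroup G}

lemma packing_t_pos (h : IsLPPacking c t P U) : 1 ≤ t ∧ 1 ≤ c := by
  have h1 : 1 ≤ Nat.card G := Nat.card_pos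
  rw [h.1] at h1
  have hne : t ≠ 0 ∧ c ≠ 0 := by
    constructor <;> rintro rfl <;> simp at h1
  omega

open Classical in
lemma charSum_subgroup (χ : G →* ℂˣ) (U : Subgroup G) :
    charSum χ (U : Set G)
      = if IsPrincipalOn χ U then (Nat.card U : ℂ) else 0 := by
  classical
  rw [charSum_eq_sum]
  by_cases hp : IsPrincipalOn χ U
  · rw [if_pos hp]
    exact sum_indC_subgroup_principal hp
  · rw [if_neg hp]
    obtain ⟨u0, hu0, hne⟩ : ∃ u0 ∈ U, χ u0 ≠ 1 := by
      unfold IsPrincipalOn at hp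
      push_neg at hp
      exact hp
    exact sum_indC_subgroup_eq_zero hu0 hne

lemma charSum_packing_sum (h : IsLPPacking c t P U) {χ : G →* ℂˣ} (hχ : χ ≠ 1) :
    ∑ i, charSum χ (P i) = - charSum χ (U : Set G) := by
  have hiu : ∑ i, charSum χ (P i) = charSum χ (⋃ i, P i) := by
    rw [charSum_eq_sum, eq_comm]
    calc ∑ g : G, indC (⋃ i, P i) g * (χ g : ℂ)
        = ∑ g : G, ∑ i, indC (P i) g * (χ g : ℂ) := by
          refine Finset.sum_congr rfl fun g _ => ?_
          rw [indC_iUnion h.2.2.2.1, Finset.sum_mul]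
      _ = ∑ i, ∑ g : G, indC (P i) g * (χ g : ℂ) := Finset.sum_comm
      _ = ∑ i, charSum χ (P i) := by
          exact Finset.sum_congr rfl fun i _ => (charSum_eq_sum χ (P i)).symm
  rw [hiu, h.2.2.2.2, charSum_eq_sum, charSum_eq_sum]
  have : ∀ g : G, indC (Set.univ \ (U : Set G)) g * (χ g : ℂ)
      = (χ g : ℂ) - indC (U : Set G) g * (χ g : ℂ) := by
    intro g
    by_cases hg : g ∈ U
    · rw [indC_of_not_mem (by simp [hg]), indC_of_mem (by simpa using hg)]
      ring
    · rw [indC_of_mem (by simp [hg]), indC_of_not_mem (by simpa using hg)]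
      ring
  rw [Finset.sum_congr rfl fun g _ => this g, Finset.sum_sub_distrib, sum_char_ne_one hχ]
  ring

/-- The key structure: values of character sums on an LP-packing. -/
lemma packing_char_structure (h : IsLPPacking c t P U) {χ : G →* ℂˣ} (hχ : χ ≠ 1) :
    (IsPrincipalOn χ U ∧ ∀ i, charSum χ (P i) = -(c : ℂ)) ∨
    (¬ IsPrincipalOn χ U ∧ ∃ i0 : Fin t, ∀ i,
      charSum χ (P i) = if i = i0 then (t : ℂ) * c - c else -(c : ℂ)) := by
  classical
  obtain ⟨ht, hc⟩ := packing_t_pos h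
  have htc : (1 : ℕ) ≤ t * c := Nat.one_le_iff_ne_zero.mpr (by positivity)
  have hdich : ∀ i, charSum χ (P i) = -(c : ℂ) ∨ charSum χ (P i) = (t : ℂ) * c - c := by
    intro i
    rcases latin_charSum (h.2.2.1 i) htc hχ with hh | hh
    · exact Or.inl hh
    · right; rw [hh]; push_cast; ring
  have htcne : ((t : ℂ) * c) ≠ 0 := by
    have : (t : ℂ) ≠ 0 := Nat.cast_ne_zero.mpr (by omega)
    have h2 : (c : ℂ) ≠ 0 := Nat.cast_ne_zero.mpr (by omega)
    exact mul_ne_zero this h2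
  set Sf : Finset (Fin t) :=
    Finset.univ.filter (fun i => charSum χ (P i) = (t : ℂ) * c - c) with hSf
  have hnot : ∀ i ∉ Sf, charSum χ (P i) = -(c : ℂ) := by
    intro i hi
    rcases hdich i with hh | hh
    · exact hh
    · exact absurd (Finset.mem_filter.mpr ⟨Finset.mem_univ i, hh⟩) hi
  have hsum : ∑ i, charSum χ (P i)
      = (Sf.card : ℂ) * ((t : ℂ) * c - c) - ((t : ℕ) - Sf.card : ℂ) * c := by
    rw [← Finset.sum_filter_add_sum_filter_not Finset.univ
      (fun i => charSum χ (P i) = (t : ℂ) * c - c)]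
    have e1 : ∑ i ∈ Sf, charSum χ (P i) = (Sf.card : ℂ) * ((t : ℂ) * c - c) := by
      rw [Finset.sum_congr rfl fun i hi => (Finset.mem_filter.mp hi).2, Finset.sum_const,
        nsmul_eq_mul]
    have e2 : ∑ i ∈ Finset.univ.filter (fun i => ¬ (charSum χ (P i) = (t : ℂ) * c - c)),
        charSum χ (P i) = ((Finset.univ.filter
          (fun i => ¬ (charSum χ (P i) = (t : ℂ) * c - c))).card : ℂ) * (-(c : ℂ)) := by
      rw [Finset.sum_congr rfl fun i hi => hnot i (by
        intro hmem
        exact (Finset.mem_filter.mp hi).2 (Finset.mem_filter.mp hmem).2), Finset.sum_const,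
        nsmul_eq_mul]
    rw [e1, e2]
    have hcards : (Finset.univ.filter
        (fun i => ¬ (charSum χ (P i) = (t : ℂ) * c - c))).card = t - Sf.card := by
      have := Finset.card_filter_add_card_filter_not (s := Finset.univ)
        (p := fun i => charSum χ (P i) = (t : ℂ) * c - c)
      simp only [Finset.card_univ, Fintype.card_fin] at this
      rw [hSf]
      omega
    rw [hcards]
    have hle : Sf.card ≤ t := by
      have := Finset.card_filter_le Finset.univ
        (fun i => charSum χ (P i) = (t : ℂ) * c - c)
      simpa using this
    push_cast [Nat.cast_sub hle]
    ring
  by_cases hp : IsPrincipalOn χ U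
  · left
    refine ⟨hp, ?_⟩
    have hsum2 : ∑ i, charSum χ (P i) = -((t : ℂ) * c) := by
      rw [charSum_packing_sum h hχ, charSum_subgroup, if_pos hp, h.2.1]
      push_cast; ring
    have hm : (Sf.card : ℂ) * ((t : ℂ) * c) = 0 := by
      rw [hsum] at hsum2
      push_cast [Nat.cast_sub (show Sf.card ≤ t by
        simpa using Finset.card_filter_le Finset.univ
          (fun i => charSum χ (P i) = (t : ℂ) * c - c))] at hsum2
      linear_combination hsum2
    have hm0 : Sf.card = 0 := by
      rcases mul_eq_zero.mp hm with hh | hh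
      · exact_mod_cast hh
      · exact absurd hh htcne
    intro i
    refine hnot i fun hmem => ?_
    rw [Finset.card_eq_zero.mp hm0] at hmem
    exact absurd hmem (Finset.notMem_empty i)
  · right
    refine ⟨hp, ?_⟩
    have hsum2 : ∑ i, charSum χ (P i) = 0 := by
      rw [charSum_packing_sum h hχ, charSum_subgroup, if_neg hp]
      ring
    have hm : ((Sf.card : ℂ) - 1) * ((t : ℂ) * c) = 0 := by
      rw [hsum] at hsum2
      push_cast [Nat.cast_sub (show Sf.card ≤ t by
        simpa using Finset.card_filter_le Finset.univ
          (fun i => charSum χ (P i) = (t : ℂ) * c - c))] at hsum2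
      linear_combination hsum2
    have hm1 : Sf.card = 1 := by
      rcases mul_eq_zero.mp hm with hh | hh
      · have : (Sf.card : ℂ) = 1 := by linear_combination hh
        exact_mod_cast this
      · exact absurd hh htcne
    obtain ⟨i0, hi0⟩ := Finset.card_eq_one.mp hm1
    refine ⟨i0, fun i => ?_⟩
    by_cases hii : i = i0
    · rw [if_pos hii, hii]
      have : i0 ∈ Sf := by rw [hi0]; exact Finset.mem_singleton_self i0
      exact (Finset.mem_filter.mp this).2
    · rw [if_neg hii]
      refine hnot i fun hmem => hii ?_
      rw [hi0] at hmem
      exact Finset.mem_singleton.mp hmem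

lemma packing_charSum_principal (h : IsLPPacking c t P U) (i : Fin t) :
    charSum (1 : G →* ℂˣ) (P i) = (c : ℂ) * ((t : ℂ) * c) - c := by
  rw [charSum_one, ((h.2.2.1 i).1).2.1]
  have htc : (1 : ℕ) ≤ t * c := by
    obtain ⟨ht, hc⟩ := packing_t_pos h
    exact Nat.one_le_iff_ne_zero.mpr (by positivity)
  push_cast [Nat.cast_sub htc]
  ring

end pack

section basic2
variable [CommGroup G] [Fintype G]

lemma charSum_union {A B : Set G} (h : Disjoint A B) (χ : G →* ℂˣ) :
    charSum χ (A ∪ B) = charSum χ A + charSum χ B := by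
  rw [charSum_eq_sum, charSum_eq_sum, charSum_eq_sum, ← Finset.sum_add_distrib]
  refine Finset.sum_congr rfl fun g _ => ?_
  rw [indC_union h]
  ring

lemma charSum_iUnion {t : ℕ} {P : Fin t → Set G}
    (h : ∀ i j, i ≠ j → Disjoint (P i) (P j)) (χ : G →* ℂˣ) :
    charSum χ (⋃ i, P i) = ∑ i, charSum χ (P i) := by
  rw [charSum_eq_sum]
  calc ∑ g : G, indC (⋃ i, P i) g * (χ g : ℂ)
      = ∑ g : G, ∑ i, indC (P i) g * (χ g : ℂ) := by
        refine Finset.sum_congr rfl fun g _ => ?_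
        rw [indC_iUnion h, Finset.sum_mul]
    _ = ∑ i, ∑ g : G, indC (P i) g * (χ g : ℂ) := Finset.sum_comm
    _ = ∑ i, charSum χ (P i) :=
        Finset.sum_congr rfl fun i _ => (charSum_eq_sum χ (P i)).symm

end basic2

section prod
variable {G1 G2 : Type*} [CommGroup G1] [Fintype G1] [CommGroup G2] [Fintype G2]

noncomputable def ch1 (χ : G1 × G2 →* ℂˣ) : G1 →* ℂˣ := χ.comp (MonoidHom.inl G1 G2)
noncomputable def ch2 (χ : G1 × G2 →* ℂˣ) : G2 →* ℂˣ := χ.comp (MonoidHom.inr G1 G2)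

lemma char_prod_apply (χ : G1 × G2 →* ℂˣ) (a : G1) (b : G2) :
    (χ (a, b) : ℂ) = (ch1 χ a : ℂ) * (ch2 χ b : ℂ) := by
  have : (a, b) = (a, (1 : G2)) * ((1 : G1), b) := by simp
  rw [this, map_mul, Units.val_mul]
  rfl

lemma charSum_prodSet (χ : G1 × G2 →* ℂˣ) (A : Set G1) (B : Set G2) :
    charSum χ (A ×ˢ B) = charSum (ch1 χ) A * charSum (ch2 χ) B := by
  rw [charSum_eq_sum, charSum_eq_sum, charSum_eq_sum, Finset.sum_mul_sum]
  rw [show ∑ i : G1, ∑ j : G2, indC A i * ((ch1 χ) i : ℂ) * (indC B j * ((ch2 χ) j : ℂ))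
      = ∑ p : G1 × G2, indC A p.1 * ((ch1 χ) p.1 : ℂ) * (indC B p.2 * ((ch2 χ) p.2 : ℂ))
    from (Fintype.sum_prod_type (f := fun p : G1 × G2 =>
      indC A p.1 * ((ch1 χ) p.1 : ℂ) * (indC B p.2 * ((ch2 χ) p.2 : ℂ)))).symm]
  refine Fintype.sum_congr _ _ fun p => ?_
  rw [indC_prod, char_prod_apply χ p.1 p.2]
  ring

lemma char_one_iff (χ : G1 × G2 →* ℂˣ) : χ = 1 ↔ ch1 χ = 1 ∧ ch2 χ = 1 := by
  constructor
  · rintro rfl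
    constructor <;> ext x <;> rfl
  · rintro ⟨h1, h2⟩
    ext ⟨a, b⟩
    have e1 : χ (a, b) = χ (a, 1) * χ (1, b) := by
      rw [← map_mul]
      simp
    have : ch1 χ a = 1 := by rw [h1]; rfl
    have h1' : χ (a, 1) = 1 := this
    have : ch2 χ b = 1 := by rw [h2]; rfl
    have h2' : χ (1, b) = 1 := this
    rw [e1, h1', h2', mul_one]
    rfl

lemma principal_prod_iff (χ : G1 × G2 →* ℂˣ) (U1 : Subgroup G1) (U2 : Subgroup G2) :
    IsPrincipalOn χ (U1.prod U2) ↔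
      IsPrincipalOn (ch1 χ) U1 ∧ IsPrincipalOn (ch2 χ) U2 := by
  constructor
  · intro h
    constructor
    · intro u hu
      exact h (u, 1) (Subgroup.mem_prod.mpr ⟨hu, one_mem U2⟩)
    · intro u hu
      exact h (1, u) (Subgroup.mem_prod.mpr ⟨one_mem U1, hu⟩)
  · rintro ⟨h1, h2⟩ ⟨a, b⟩ hab
    obtain ⟨ha, hb⟩ := Subgroup.mem_prod.mp hab
    have e1 : χ (a, b) = χ (a, 1) * χ (1, b) := by
      rw [← map_mul]; simp
    have ha' : χ (a, 1) = 1 := h1 a ha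
    have hb' : χ (1, b) = 1 := h2 b hb
    rw [e1, ha', hb', mul_one]

end prod

lemma sum_ite_fin {t : ℕ} [NeZero t] (j0 : Fin t) (X Y : ℂ) :
    ∑ j : Fin t, (if j = j0 then X else Y) = X + ((t : ℂ) - 1) * Y := by
  classical
  have : ∀ j : Fin t, (if j = j0 then X else Y) = Y + (if j = j0 then X - Y else 0) := by
    intro j; split_ifs <;> ring
  rw [Finset.sum_congr rfl fun j _ => this j, Finset.sum_add_distrib, Finset.sum_const,
    Finset.card_univ, Fintype.card_fin, nsmul_eq_mul, Finset.sum_ite_eq' Finset.univ j0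
      (fun _ => X - Y), if_pos (Finset.mem_univ j0)]
  have ht : (1 : ℕ) ≤ t := Nat.one_le_iff_ne_zero.mpr (NeZero.ne t)
  ring

lemma sum_shift {t : ℕ} [NeZero t] (l : Fin t) (f : Fin t → ℂ) :
    ∑ i : Fin t, f (i + l) = ∑ j : Fin t, f j :=
  Fintype.sum_equiv (Equiv.addRight l) _ _ fun i => rfl

lemma sum_prod_ite {t : ℕ} [NeZero t] (i0 j0 l : Fin t) (A1 B1 A2 B2 : ℂ) :
    ∑ i : Fin t, (if i = i0 then A1 else B1) * (if i + l = j0 then A2 else B2)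
      = if i0 + l = j0 then A1 * A2 + ((t : ℂ) - 1) * B1 * B2
        else A1 * B2 + B1 * A2 + ((t : ℂ) - 2) * B1 * B2 := by
  classical
  have hcond : ∀ i : Fin t, (i + l = j0) ↔ (i = j0 - l) := by
    intro i
    constructor
    · intro h; rw [← h]; abel
    · intro h; rw [h]; abel
  rw [Finset.sum_congr rfl fun i _ => by
    rw [show (if i + l = j0 then A2 else B2) = (if i = j0 - l then A2 else B2) by
      by_cases h : i + l = j0
      · rw [if_pos h, if_pos ((hcond i).mp h)]
      · rw [if_neg h, if_neg (fun hc => h ((hcond i).mpr hc))]]]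
  by_cases hcase : i0 = j0 - l
  · rw [if_pos (by rw [(hcond i0)]; exact hcase)]
    have : ∀ i : Fin t, (if i = i0 then A1 else B1) * (if i = j0 - l then A2 else B2)
        = if i = i0 then A1 * A2 else B1 * B2 := by
      intro i
      rw [← hcase]
      split_ifs <;> ring
    rw [Finset.sum_congr rfl fun i _ => this i, sum_ite_fin]
    ring
  · rw [if_neg (fun hc => hcase ((hcond i0).mp hc))]
    have : ∀ i : Fin t, (if i = i0 then A1 else B1) * (if i = j0 - l then A2 else B2)
        = B1 * B2 + (if i = i0 then A1 * B2 - B1 * B2 else 0)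
            + (if i = j0 - l then B1 * A2 - B1 * B2 else 0) := by
      intro i
      by_cases h1 : i = i0 <;> by_cases h2 : i = j0 - l
      · exact absurd (h1 ▸ h2) hcase
      · simp only [if_pos h1, if_neg h2]; ring
      · simp only [if_neg h1, if_pos h2]; ring
      · simp only [if_neg h1, if_neg h2]; ring
    rw [Finset.sum_congr rfl fun i _ => this i, Finset.sum_add_distrib,
      Finset.sum_add_distrib, Finset.sum_const, Finset.card_univ, Fintype.card_fin,
      nsmul_eq_mul, Finset.sum_ite_eq' Finset.univ i0 (fun _ => A1 * B2 - B1 * B2),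
      Finset.sum_ite_eq' Finset.univ (j0 - l) (fun _ => B1 * A2 - B1 * B2),
      if_pos (Finset.mem_univ _), if_pos (Finset.mem_univ _)]
    ring

theorem stmt_9 {G1 G2 : Type*} [CommGroup G1] [Finite G1] [CommGroup G2] [Finite G2]
    (c1 c2 t : ℕ) (U1 : Subgroup G1) (U2 : Subgroup G2)
    (P1 : Fin t → Set G1) (P2 : Fin t → Set G2)
    (h1 : IsLPPacking c1 t P1 U1) (h2 : IsLPPacking c2 t P2 U2) :
    IsLPPacking (t * c1 * c2) t
      (fun l : Fin t =>
        (P1 l ×ˢ (U2 : Set G2)) ∪ ((U1 : Set G1) ×ˢ P2 l) ∪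
          ⋃ i : Fin t, P1 i ×ˢ P2 (i + l))
      (U1.prod U2) := by
  classical
  cases nonempty_fintype G1
  cases nonempty_fintype G2
  obtain ⟨ht, hc1⟩ := packing_t_pos h1
  obtain ⟨-, hc2⟩ := packing_t_pos h2
  haveI : NeZero t := ⟨by omega⟩
  have hP1U : ∀ (i : Fin t) (x : G1), x ∈ P1 i → x ∉ U1 := by
    intro i x hx hxU
    have hm : x ∈ ⋃ i, P1 i := Set.mem_iUnion.mpr ⟨i, hx⟩
    rw [h1.2.2.2.2] at hm
    exact hm.2 hxU
  have hP2U : ∀ (i : Fin t) (x : G2), x ∈ P2 i → x ∉ U2 := by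
    intro i x hx hxU
    have hm : x ∈ ⋃ i, P2 i := Set.mem_iUnion.mpr ⟨i, hx⟩
    rw [h2.2.2.2.2] at hm
    exact hm.2 hxU
  have hcov1 : ∀ x : G1, x ∉ U1 → ∃ i, x ∈ P1 i := by
    intro x hx
    have hm : x ∈ Set.univ \ (U1 : Set G1) := ⟨trivial, hx⟩
    rw [← h1.2.2.2.2] at hm
    exact Set.mem_iUnion.mp hm
  have hcov2 : ∀ x : G2, x ∉ U2 → ∃ i, x ∈ P2 i := by
    intro x hx
    have hm : x ∈ Set.univ \ (U2 : Set G2) := ⟨trivial, hx⟩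
    rw [← h2.2.2.2.2] at hm
    exact Set.mem_iUnion.mp hm
  have h1notP1 : ∀ i, (1 : G1) ∉ P1 i := fun i => (h1.2.2.1 i).2.1
  have h1notP2 : ∀ i, (1 : G2) ∉ P2 i := fun i => (h2.2.2.1 i).2.1
  have hinvP1 : ∀ i, (P1 i)⁻¹ = P1 i := fun i => (h1.2.2.1 i).2.2
  have hinvP2 : ∀ i, (P2 i)⁻¹ = P2 i := fun i => (h2.2.2.1 i).2.2
  -- disjointness of the three pieces, for each l
  have dAB : ∀ l : Fin t, Disjoint (P1 l ×ˢ (U2 : Set G2)) ((U1 : Set G1) ×ˢ P2 l) := by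
    intro l
    rw [Set.disjoint_left]
    rintro ⟨a, b⟩ ⟨ha, hb⟩ ⟨ha', hb'⟩
    exact hP1U l a ha ha'
  have dC : ∀ l i j : Fin t, i ≠ j →
      Disjoint (P1 i ×ˢ P2 (i + l)) (P1 j ×ˢ P2 (j + l)) := by
    intro l i j hij
    rw [Set.disjoint_left]
    rintro ⟨a, b⟩ ⟨ha, hb⟩ ⟨ha', hb'⟩
    exact Set.disjoint_left.mp (h1.2.2.2.1 i j hij) ha ha'
  have dABC : ∀ l : Fin t, Disjoint ((P1 l ×ˢ (U2 : Set G2)) ∪ ((U1 : Set G1) ×ˢ P2 l))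
      (⋃ i : Fin t, P1 i ×ˢ P2 (i + l)) := by
    intro l
    rw [Set.disjoint_left]
    rintro ⟨a, b⟩ hab hab'
    obtain ⟨i, ha', hb'⟩ : ∃ i, a ∈ P1 i ∧ b ∈ P2 (i + l) := by
      simpa using hab'
    rcases hab with ⟨ha, hb⟩ | ⟨ha, hb⟩
    · exact hP2U (i + l) b hb' hb
    · exact hP1U i a ha' ha
  -- character sum decomposition
  have hKfor : ∀ (l : Fin t) (χ : G1 × G2 →* ℂˣ),
      charSum χ ((P1 l ×ˢ (U2 : Set G2)) ∪ ((U1 : Set G1) ×ˢ P2 l) ∪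
          ⋃ i : Fin t, P1 i ×ˢ P2 (i + l))
        = charSum (ch1 χ) (P1 l) * charSum (ch2 χ) (U2 : Set G2)
          + charSum (ch1 χ) (U1 : Set G1) * charSum (ch2 χ) (P2 l)
          + ∑ i, charSum (ch1 χ) (P1 i) * charSum (ch2 χ) (P2 (i + l)) := by
    intro l χ
    rw [charSum_union (dABC l) χ, charSum_union (dAB l) χ, charSum_iUnion (dC l) χ,
      charSum_prodSet, charSum_prodSet]
    congr 1
    exact Finset.sum_congr rfl fun i _ => charSum_prodSet χ _ _
  refine ⟨?_, ?_, ?_, ?_, ?_⟩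
  · rw [Nat.card_prod, h1.1, h2.1]; ring
  · have e : Nat.card (U1.prod U2) = Nat.card U1 * Nat.card U2 := by
      rw [Nat.card_congr (Subgroup.prodEquiv U1 U2).toEquiv, Nat.card_prod]
    rw [e, h1.2.1, h2.2.1]; ring
  · -- the PDS property for each K l
    intro l
    refine latin_of_charSum ?_ ?_ ?_ ?_ ?_ ?_
    · rw [Nat.card_prod, h1.1, h2.1]; ring
    · exact Nat.one_le_iff_ne_zero.mpr (Nat.mul_ne_zero (by omega)
        (Nat.mul_ne_zero (Nat.mul_ne_zero (by omega) (by omega)) (by omega)))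
    · -- 1 ∉ K l
      intro hmem
      simp only [Set.mem_union, Set.mem_prod, Set.mem_iUnion] at hmem
      rcases hmem with (⟨ha, _⟩ | ⟨_, hb⟩) | ⟨i, ha, _⟩
      · exact h1notP1 l ha
      · exact h1notP2 l hb
      · exact h1notP1 i ha
    · -- inversion invariance
      ext ⟨a, b⟩
      rw [Set.mem_inv]
      have hinv_pair : ((a, b) : G1 × G2)⁻¹ = (a⁻¹, b⁻¹) := rfl
      rw [hinv_pair]
      simp only [Set.mem_union, Set.mem_prod, Set.mem_iUnion]
      have e1 : ∀ (i : Fin t) (y : G1), y⁻¹ ∈ P1 i ↔ y ∈ P1 i :=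
        fun i y => mem_inv_iff_of_inv_eq (hinvP1 i) y
      have e2 : ∀ (i : Fin t) (y : G2), y⁻¹ ∈ P2 i ↔ y ∈ P2 i :=
        fun i y => mem_inv_iff_of_inv_eq (hinvP2 i) y
      have eU1 : ∀ y : G1, y⁻¹ ∈ (U1 : Set G1) ↔ y ∈ (U1 : Set G1) := fun y => by
        simp [inv_mem_iff]
      have eU2 : ∀ y : G2, y⁻¹ ∈ (U2 : Set G2) ↔ y ∈ (U2 : Set G2) := fun y => by
        simp [inv_mem_iff]
      simp only [e1, e2, eU1, eU2]
    · -- cardinality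
      have hone : ch1 (1 : G1 × G2 →* ℂˣ) = 1 := MonoidHom.one_comp _
      have htwo : ch2 (1 : G1 × G2 →* ℂˣ) = 1 := MonoidHom.one_comp _
      have hpU1 : IsPrincipalOn (1 : G1 →* ℂˣ) U1 := fun u _ => rfl
      have hpU2 : IsPrincipalOn (1 : G2 →* ℂˣ) U2 := fun u _ => rfl
      have hKone := hKfor l 1
      rw [hone, htwo, charSum_subgroup, if_pos hpU2, charSum_subgroup, if_pos hpU1,
        h1.2.1, h2.2.1, packing_charSum_principal h1 l, packing_charSum_principal h2 l,
        Finset.sum_congr rfl (fun i _ => by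
          rw [packing_charSum_principal h1 i, packing_charSum_principal h2 (i + l)]),
        Finset.sum_const, Finset.card_univ, Fintype.card_fin, nsmul_eq_mul] at hKone
      have hn' : 1 ≤ t * (t * c1 * c2) := Nat.one_le_iff_ne_zero.mpr (Nat.mul_ne_zero
        (by omega) (Nat.mul_ne_zero (Nat.mul_ne_zero (by omega) (by omega)) (by omega)))
      have hcast : ((Nat.card ((P1 l ×ˢ (U2 : Set G2)) ∪ ((U1 : Set G1) ×ˢ P2 l) ∪
          ⋃ i : Fin t, P1 i ×ˢ P2 (i + l) : Set (G1 × G2))) : ℂ)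
          = ((t * c1 * c2 * (t * (t * c1 * c2) - 1) : ℕ) : ℂ) := by
        rw [← charSum_one, hKone]
        push_cast [Nat.cast_sub hn']
        ring
      exact Nat.cast_injective hcast
    · -- character values
      intro χ hχ
      have hne1 : ¬(ch1 χ = 1 ∧ ch2 χ = 1) := fun hc => hχ ((char_one_iff χ).mpr hc)
      have hside1 : (IsPrincipalOn (ch1 χ) U1 ∧
          charSum (ch1 χ) (U1 : Set G1) = (t : ℂ) * c1 ∧
          ∃ a1 : ℂ, (∀ i, charSum (ch1 χ) (P1 i) = a1) ∧
            (ch1 χ = 1 ∨ a1 = -(c1 : ℂ))) ∨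
        (¬ IsPrincipalOn (ch1 χ) U1 ∧ charSum (ch1 χ) (U1 : Set G1) = 0 ∧
          ∃ i0 : Fin t, ∀ i, charSum (ch1 χ) (P1 i)
            = if i = i0 then (t : ℂ) * c1 - c1 else -(c1 : ℂ)) := by
        by_cases hp : IsPrincipalOn (ch1 χ) U1
        · left
          refine ⟨hp, ?_, ?_⟩
          · rw [charSum_subgroup, if_pos hp, h1.2.1]; push_cast; ring
          · by_cases he : ch1 χ = 1
            · exact ⟨(c1 : ℂ) * ((t : ℂ) * c1) - c1,
                fun i => by rw [he]; exact packing_charSum_principal h1 i, Or.inl he⟩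
            · rcases packing_char_structure h1 he with ⟨_, hall⟩ | ⟨hnp, _⟩
              · exact ⟨-(c1 : ℂ), hall, Or.inr rfl⟩
              · exact absurd hp hnp
        · right
          have he : ch1 χ ≠ 1 := fun h' => hp (by rw [h']; intro u _; rfl)
          refine ⟨hp, ?_, ?_⟩
          · rw [charSum_subgroup, if_neg hp]
          · rcases packing_char_structure h1 he with ⟨hpp, _⟩ | ⟨_, hex⟩
            · exact absurd hpp hp
            · exact hex
      have hside2 : (IsPrincipalOn (ch2 χ) U2 ∧
          charSum (ch2 χ) (U2 : Set G2) = (t : ℂ) * c2 ∧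
          ∃ a2 : ℂ, (∀ i, charSum (ch2 χ) (P2 i) = a2) ∧
            (ch2 χ = 1 ∨ a2 = -(c2 : ℂ))) ∨
        (¬ IsPrincipalOn (ch2 χ) U2 ∧ charSum (ch2 χ) (U2 : Set G2) = 0 ∧
          ∃ j0 : Fin t, ∀ j, charSum (ch2 χ) (P2 j)
            = if j = j0 then (t : ℂ) * c2 - c2 else -(c2 : ℂ)) := by
        by_cases hp : IsPrincipalOn (ch2 χ) U2
        · left
          refine ⟨hp, ?_, ?_⟩
          · rw [charSum_subgroup, if_pos hp, h2.2.1]; push_cast; ring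
          · by_cases he : ch2 χ = 1
            · exact ⟨(c2 : ℂ) * ((t : ℂ) * c2) - c2,
                fun i => by rw [he]; exact packing_charSum_principal h2 i, Or.inl he⟩
            · rcases packing_char_structure h2 he with ⟨_, hall⟩ | ⟨hnp, _⟩
              · exact ⟨-(c2 : ℂ), hall, Or.inr rfl⟩
              · exact absurd hp hnp
        · right
          have he : ch2 χ ≠ 1 := fun h' => hp (by rw [h']; intro u _; rfl)
          refine ⟨hp, ?_, ?_⟩
          · rw [charSum_subgroup, if_neg hp]
          · rcases packing_char_structure h2 he with ⟨hpp, _⟩ | ⟨_, hex⟩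
            · exact absurd hpp hp
            · exact hex
      rw [hKfor l χ]
      rcases hside1 with ⟨hp1, hT1, a1, hS1, ha1⟩ | ⟨hp1, hT1, i0, hS1⟩
      · rcases hside2 with ⟨hp2, hT2, a2, hS2, ha2⟩ | ⟨hp2, hT2, j0, hS2⟩
        · -- both principal
          have hsum : ∑ i, charSum (ch1 χ) (P1 i) * charSum (ch2 χ) (P2 (i + l))
              = (t : ℂ) * (a1 * a2) := by
            rw [Finset.sum_congr rfl fun i _ => by rw [hS1 i, hS2 (i + l)],
              Finset.sum_const, Finset.card_univ, Fintype.card_fin, nsmul_eq_mul]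
          rw [hS1 l, hS2 l, hT1, hT2, hsum]
          left
          rcases ha1 with he1 | ha1
          · rcases ha2 with he2 | ha2
            · exact absurd ⟨he1, he2⟩ hne1
            · rw [ha2]; push_cast; ring
          · rw [ha1]; push_cast; ring
        · -- χ1 principal, χ2 not
          have hsum : ∑ i, charSum (ch1 χ) (P1 i) * charSum (ch2 χ) (P2 (i + l)) = 0 := by
            rw [Finset.sum_congr rfl fun i _ => by rw [hS1 i, hS2 (i + l)],
              ← Finset.mul_sum,
              sum_shift l (fun j => if j = j0 then (t : ℂ) * c2 - c2 else -(c2 : ℂ)),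
              sum_ite_fin]
            ring
          rw [hS1 l, hS2 l, hT1, hT2, hsum]
          by_cases hl : l = j0
          · rw [if_pos hl]
            right; push_cast; ring
          · rw [if_neg hl]
            left; push_cast; ring
      · rcases hside2 with ⟨hp2, hT2, a2, hS2, ha2⟩ | ⟨hp2, hT2, j0, hS2⟩
        · -- χ1 not principal, χ2 principal
          have hsum : ∑ i, charSum (ch1 χ) (P1 i) * charSum (ch2 χ) (P2 (i + l)) = 0 := by
            rw [Finset.sum_congr rfl fun i _ => by rw [hS1 i, hS2 (i + l)],
              ← Finset.sum_mul, sum_ite_fin]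
            ring
          rw [hS1 l, hS2 l, hT1, hT2, hsum]
          by_cases hl : l = i0
          · rw [if_pos hl]
            right; push_cast; ring
          · rw [if_neg hl]
            left; push_cast; ring
        · -- both nonprincipal
          have hsum : ∑ i, charSum (ch1 χ) (P1 i) * charSum (ch2 χ) (P2 (i + l))
              = if i0 + l = j0 then
                  ((t : ℂ) * c1 - c1) * ((t : ℂ) * c2 - c2)
                    + ((t : ℂ) - 1) * (-(c1 : ℂ)) * (-(c2 : ℂ))
                else ((t : ℂ) * c1 - c1) * (-(c2 : ℂ)) + (-(c1 : ℂ)) * ((t : ℂ) * c2 - c2)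
                    + ((t : ℂ) - 2) * (-(c1 : ℂ)) * (-(c2 : ℂ)) := by
            rw [Finset.sum_congr rfl fun i _ => by rw [hS1 i, hS2 (i + l)],
              sum_prod_ite]
          rw [hT1, hT2, hsum]
          by_cases hio : i0 + l = j0
          · rw [if_pos hio]
            right; push_cast; ring
          · rw [if_neg hio]
            left; push_cast; ring
  · -- pairwise disjointness
    intro l l' hne
    rw [Set.disjoint_left]
    rintro ⟨a, b⟩ hx hx'
    simp only [Set.mem_union, Set.mem_prod, Set.mem_iUnion] at hx hx'
    rcases hx with (⟨ha, hb⟩ | ⟨ha, hb⟩) | ⟨i, ha, hb⟩ <;>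
      rcases hx' with (⟨ha', hb'⟩ | ⟨ha', hb'⟩) | ⟨j, ha', hb'⟩
    · exact Set.disjoint_left.mp (h1.2.2.2.1 l l' hne) ha ha'
    · exact hP1U l a ha ha'
    · exact hP2U (j + l') b hb' hb
    · exact hP1U l' a ha' ha
    · exact Set.disjoint_left.mp (h2.2.2.2.1 l l' hne) hb hb'
    · exact hP1U j a ha' ha
    · exact hP2U (i + l) b hb hb'
    · exact hP1U i a ha ha'
    · by_cases hij : i = j
      · subst hij
        have : i + l = i + l' := by
          by_contra hc
          exact Set.disjoint_left.mp (h2.2.2.2.1 _ _ hc) hb hb'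
        exact hne (add_left_cancel this)
      · exact Set.disjoint_left.mp (h1.2.2.2.1 i j hij) ha ha'
  · -- union
    ext ⟨a, b⟩
    simp only [Set.mem_iUnion, Set.mem_union, Set.mem_prod, Set.mem_diff, Set.mem_univ,
      true_and, SetLike.mem_coe, Subgroup.mem_prod]
    constructor
    · rintro ⟨l, (⟨ha, hb⟩ | ⟨ha, hb⟩) | ⟨i, ha, hb⟩⟩
      · exact fun hc => hP1U l a ha hc.1
      · exact fun hc => hP2U l b hb hc.2
      · exact fun hc => hP1U i a ha hc.1
    · intro hc
      by_cases haU : a ∈ U1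
      · by_cases hbU : b ∈ U2
        · exact absurd ⟨haU, hbU⟩ hc
        · obtain ⟨j, hj⟩ := hcov2 b hbU
          exact ⟨j, Or.inl (Or.inr ⟨haU, hj⟩)⟩
      · by_cases hbU : b ∈ U2
        · obtain ⟨i, hi⟩ := hcov1 a haU
          exact ⟨i, Or.inl (Or.inl ⟨hi, hbU⟩)⟩
        · obtain ⟨i, hi⟩ := hcov1 a haU
          obtain ⟨j, hj⟩ := hcov2 b hbU
          refine ⟨j - i, Or.inr ⟨i, hi, ?_⟩⟩
          rw [show i + (j - i) = j by abel]
          exact hj
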